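/- Fix an integer m ≥ 1 and let Y ∈ ℚ⟦X⟧ be the Fuss–Catalan generating series Y := ∑_{n≥0} (1/(mn+1))·C((m+1)n, n)·Xⁿ. Then the logarithmic derivative of Y satisfies X·Y′ = Y · ∑_{n≥1} C((m+1)n − 1, n − 1)·Xⁿ in ℚ⟦X⟧; equivalently X·Y′/Y = ∑_{n≥1} C((m+1)n − 1, n − 1)·Xⁿ. -/
import Mathlib

open Finset

/-- Generalized Fuss–Catalan / Rothe numbers
`A m a k = C(a+(m+1)k, k) − (m+1)·C(a+(m+1)k−1, k−1)  (= (a/(a+(m+1)k))·C(a+(m+1)k, k))`. -/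
noncomputable def rotheA (m a k : ℕ) : ℚ :=
  if k = 0 then 1 else
    (Nat.choose (a + (m + 1) * k) k : ℚ) -
      ((m : ℚ) + 1) * (Nat.choose (a + (m + 1) * k - 1) (k - 1) : ℚ)

lemma rotheA_zero (m a : ℕ) : rotheA m a 0 = 1 := by simp [rotheA]

lemma rotheA_zero_left (m k : ℕ) (hk : k ≠ 0) : rotheA m 0 k = 0 := by
  obtain ⟨k', rfl⟩ : ∃ k', k = k' + 1 := ⟨k - 1, by omega⟩
  have h1 : (m + 1) * (k' + 1) = m * k' + m + k' + 1 := by ring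
  have hpos : 1 ≤ (m + 1) * (k' + 1) := by omega
  obtain ⟨P, hP⟩ : ∃ P, (m + 1) * (k' + 1) = P + 1 := ⟨(m + 1) * (k' + 1) - 1, by omega⟩
  have key : (P + 1) * Nat.choose P k' = Nat.choose (P + 1) (k' + 1) * (k' + 1) :=
    Nat.add_one_mul_choose_eq P k'
  have keyQ : ((P : ℚ) + 1) * (Nat.choose P k' : ℚ) =
      (Nat.choose (P + 1) (k' + 1) : ℚ) * ((k' : ℚ) + 1) := by
    exact_mod_cast congrArg (fun x : ℕ => (x : ℚ)) key
  have hPQ : ((m : ℚ) + 1) * ((k' : ℚ) + 1) = (P : ℚ) + 1 := by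
    exact_mod_cast congrArg (fun x : ℕ => (x : ℚ)) hP
  have e0 : 0 + (m + 1) * (k' + 1) = P + 1 := by omega
  have hk1 : ((k' : ℚ) + 1) ≠ 0 := by positivity
  have hy : ((m : ℚ) + 1) * (Nat.choose P k' : ℚ) = ((Nat.choose (P + 1) (k' + 1)) : ℚ) := by
    apply mul_right_cancel₀ hk1
    rw [← hPQ] at keyQ
    linear_combination keyQ
  simp only [rotheA, if_neg (Nat.succ_ne_zero k'), e0, Nat.add_sub_cancel]
  linear_combination -hy

/-- key Pascal-type recurrence for `rotheA`. -/
lemma rotheA_rec (m a k : ℕ) :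
    rotheA m (a + 1) (k + 1) = rotheA m a (k + 1) + rotheA m (a + 1 + m) k := by
  rcases k with _ | k
  · -- bottom index 1
    simp [rotheA, Nat.choose_one_right]
  · -- bottom index k+2
    obtain ⟨Q, hQ⟩ : ∃ Q, a + (m + 1) * (k + 2) = Q + 1 := by
      have : a + (m + 1) * (k + 2) = a + m * k + 2 * m + k + 2 := by ring
      exact ⟨a + m * k + 2 * m + k + 1, by omega⟩
    have e1 : a + 1 + (m + 1) * (k + 2) = (Q + 1) + 1 := by omega
    have e2 : a + 1 + m + (m + 1) * (k + 1) = Q + 1 := by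
      have : a + 1 + m + (m + 1) * (k + 1) = a + (m + 1) * (k + 2) := by ring
      omega
    simp only [rotheA, if_neg (Nat.succ_ne_zero _), e1, e2, hQ, Nat.add_sub_cancel,
      Nat.succ_sub_one]
    -- Pascal on both binomial families
    rw [Nat.choose_succ_succ' (Q + 1) (k + 1), Nat.choose_succ_succ' Q (k + 1),
      Nat.choose_succ_succ' Q k]
    push_cast
    ring

/-- Rothe's convolution identity. -/
lemma rothe (m : ℕ) : ∀ n a c : ℕ,
    ∑ k ∈ range (n + 1),
        rotheA m a k * (Nat.choose (c + (m + 1) * (n - k)) (n - k) : ℚ) =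
      (Nat.choose (a + c + (m + 1) * n) n : ℚ) := by
  intro n
  induction n using Nat.strong_induction_on with
  | _ n ih =>
    intro a c
    rcases n with _ | n
    · simp [rotheA_zero]
    · induction a with
      | zero =>
        rw [Finset.sum_eq_single 0]
        · simp [rotheA_zero]
        · intro k hk hk0
          rw [rotheA_zero_left m k hk0, zero_mul]
        · intro h; simp at h
      | succ a iha =>
        have hsplit : ∀ k ∈ range (n + 2),
            rotheA m (a + 1) k * (Nat.choose (c + (m + 1) * (n + 1 - k)) (n + 1 - k) : ℚ) =
            rotheA m a k * (Nat.choose (c + (m + 1) * (n + 1 - k)) (n + 1 - k) : ℚ) +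
            (if k = 0 then 0 else
              rotheA m (a + 1 + m) (k - 1) *
                (Nat.choose (c + (m + 1) * (n + 1 - k)) (n + 1 - k) : ℚ)) := by
          intro k _
          rcases k with _ | k
          · simp [rotheA_zero]
          · simp only [if_neg (Nat.succ_ne_zero k), Nat.succ_sub_one]
            rw [rotheA_rec, add_mul]
        rw [Finset.sum_congr rfl hsplit, Finset.sum_add_distrib, iha]
        have hshift : ∑ k ∈ range (n + 2),
            (if k = 0 then 0 else
              rotheA m (a + 1 + m) (k - 1) *
                (Nat.choose (c + (m + 1) * (n + 1 - k)) (n + 1 - k) : ℚ)) =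
            ∑ k ∈ range (n + 1),
              rotheA m (a + 1 + m) k * (Nat.choose (c + (m + 1) * (n - k)) (n - k) : ℚ) := by
          rw [Finset.sum_range_succ']
          simp only [if_pos rfl, add_zero, Nat.succ_ne_zero, if_false, Nat.succ_sub_one,
            Nat.add_sub_cancel, reduceIte]
          apply Finset.sum_congr rfl
          intro k _
          have : n + 1 - (k + 1) = n - k := by omega
          rw [this]
        rw [hshift, ih n (Nat.lt_succ_self _) (a + 1 + m) c]
        have e1 : a + 1 + m + c + (m + 1) * n = a + c + (m + 1) * (n + 1) := by ring
        have e2 : a + 1 + c + (m + 1) * (n + 1) = (a + c + (m + 1) * (n + 1)) + 1 := by ring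
        rw [e1, e2, Nat.choose_succ_succ (a + c + (m + 1) * (n + 1)) n]
        push_cast
        ring

/-- `rotheA m 1 n` is the Fuss–Catalan number. -/
lemma rotheA_one (m n : ℕ) :
    rotheA m 1 n = (1 / ((m : ℚ) * n + 1)) * (Nat.choose ((m + 1) * n) n : ℚ) := by
  rcases n with _ | n
  · simp [rotheA]
  · set B := (m + 1) * (n + 1) with hB
    have e1 : 1 + (m + 1) * (n + 1) = B + 1 := by omega
    have pascal : Nat.choose (B + 1) (n + 1) = Nat.choose B n + Nat.choose B (n + 1) :=
      Nat.choose_succ_succ B n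
    -- (B+1) * C(B, n) = C(B+1, n+1) * (n+1)
    have key := Nat.add_one_mul_choose_eq B n
    have keyQ : ((B : ℚ) + 1) * (Nat.choose B n : ℚ) =
        (Nat.choose (B + 1) (n + 1) : ℚ) * ((n : ℚ) + 1) := by
      exact_mod_cast congrArg (fun x : ℕ => (x : ℚ)) key
    rw [pascal] at keyQ
    push_cast at keyQ
    have hBC : (B : ℚ) = ((m : ℚ) + 1) * ((n : ℚ) + 1) := by rw [hB]; push_cast; ring
    rw [hBC] at keyQ
    have h1 : ((m : ℚ) * ((n : ℚ) + 1) + 1) ≠ 0 := by positivity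
    simp only [rotheA, if_neg (Nat.succ_ne_zero n), e1, Nat.add_sub_cancel, Nat.succ_sub_one]
    push_cast
    rw [pascal]
    push_cast
    rw [one_div, inv_mul_eq_div, eq_div_iff h1]
    linear_combination (-(m:ℚ)) * keyQ

/-- **Logarithmic derivative of the Fuss–Catalan series.** For `m ≥ 1`, the series
`Y = ∑_{n≥0} (1/(mn+1))·C((m+1)n, n)·Xⁿ` satisfies
`X·Y′ = Y · ∑_{n≥1} C((m+1)n − 1, n − 1)·Xⁿ` in `ℚ⟦X⟧`. -/
theorem fussCatalan_log_derivative (m : ℕ) (hm : 1 ≤ m)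
    (Y : PowerSeries ℚ)
    (hY : Y = PowerSeries.mk fun n =>
      (1 / ((m : ℚ) * n + 1)) * (Nat.choose ((m + 1) * n) n : ℚ)) :
    PowerSeries.X * PowerSeries.derivative ℚ Y =
      Y * PowerSeries.mk (fun n => if n = 0 then 0 else
        (Nat.choose ((m + 1) * n - 1) (n - 1) : ℚ)) := by
  subst hY
  ext n
  rcases n with _ | n
  · simp [PowerSeries.coeff_zero_X_mul, PowerSeries.coeff_mul]
  · rw [PowerSeries.coeff_succ_X_mul, PowerSeries.coeff_derivative, PowerSeries.coeff_mk,
      PowerSeries.coeff_mul]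
    rw [Finset.Nat.sum_antidiagonal_eq_sum_range_succ_mk]
    simp only [PowerSeries.coeff_mk]
    rw [Finset.sum_range_succ]
    simp only [Nat.sub_self, if_pos rfl, mul_zero, add_zero, reduceIte]
    have hR : ∑ k ∈ range (n + 1),
        (1 / ((m : ℚ) * k + 1)) * (Nat.choose ((m + 1) * k) k : ℚ) *
          (if n + 1 - k = 0 then (0:ℚ) else
            (Nat.choose ((m + 1) * (n + 1 - k) - 1) (n + 1 - k - 1) : ℚ)) =
        ∑ k ∈ range (n + 1),
          rotheA m 1 k * (Nat.choose (m + (m + 1) * (n - k)) (n - k) : ℚ) := by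
      apply Finset.sum_congr rfl
      intro k hk
      rw [Finset.mem_range] at hk
      have h1 : n + 1 - k ≠ 0 := by omega
      rw [if_neg h1, rotheA_one]
      have h2 : n + 1 - k = (n - k) + 1 := by omega
      have h3 : (m + 1) * ((n - k) + 1) = (m + 1) * (n - k) + m + 1 := by ring
      have h4 : ((m + 1) * (n - k) + m + 1) - 1 = m + (m + 1) * (n - k) := by omega
      rw [h2, h3, h4, Nat.add_sub_cancel]
    rw [hR, rothe m n 1 m]
    have e1 : 1 + m + (m + 1) * n = (m + 1) * (n + 1) := by ring
    rw [e1]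
    set B := (m + 1) * (n + 1) with hB
    -- (n+1) * C(B, n+1) = C(B, n) * (B - n),  B - n = m*(n+1)+1
    have key := Nat.choose_succ_right_eq B n
    have hBn : B - n = m * (n + 1) + 1 := by
      have : B = m * (n + 1) + n + 1 := by rw [hB]; ring
      omega
    rw [hBn] at key
    have keyQ : (Nat.choose B (n + 1) : ℚ) * ((n : ℚ) + 1) =
        (Nat.choose B n : ℚ) * ((m : ℚ) * ((n : ℚ) + 1) + 1) := by
      exact_mod_cast congrArg (fun x : ℕ => (x : ℚ)) key
    have h1 : ((m : ℚ) * ((n : ℚ) + 1) + 1) ≠ 0 := by positivity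
    push_cast
    rw [div_mul_eq_mul_div, div_mul_eq_mul_div, div_eq_iff h1]
    linear_combination keyQ
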